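/- Let (X, F) be a measurable space and m : F → [0,∞] a monotone measure with m(X) = 1. Then for every c ≥ 1 and every measurable function f : X → [0,∞), the Jensen type inequality ((C)∫_X f dm)^c ≤ (C)∫_X f^c dm holds. -/

import Mathlib

open scoped ENNReal
open MeasureTheory Set



lemma my_lintegral_image {s : Set ℝ} {F F' : ℝ → ℝ} (hs : MeasurableSet s)
    (hF' : ∀ x ∈ s, HasDerivWithinAt F (F' x) s x) (hF : Set.InjOn F s) (g : ℝ → ℝ≥0∞) :
    ∫⁻ x in F '' s, g x = ∫⁻ x in s, ENNReal.ofReal |F' x| * g (F x) := by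
  simpa only [ContinuousLinearMap.det_toSpanSingleton] using
    MeasureTheory.lintegral_image_eq_lintegral_abs_det_fderiv_mul volume hs
      (fun x hx => (hF' x hx).hasFDerivWithinAt) hF g

lemma my_subst_rpow {c : ℝ} (hc : 1 ≤ c) (φ : ℝ → ℝ≥0∞) :
    ∫⁻ t in Set.Ioi (0:ℝ), φ t
      = ∫⁻ s in Set.Ioi (0:ℝ), ENNReal.ofReal (c * s ^ (c - 1)) * φ (s ^ c) := by
  have hc0 : 0 < c := lt_of_lt_of_le one_pos hc
  have himg : (fun s : ℝ => s ^ c) '' Set.Ioi 0 = Set.Ioi 0 := by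
    ext t
    constructor
    · rintro ⟨s, hs, rfl⟩
      exact Real.rpow_pos_of_pos hs c
    · intro ht
      exact ⟨t ^ c⁻¹, Real.rpow_pos_of_pos ht c⁻¹, Real.rpow_inv_rpow ht.le hc0.ne'⟩
  have hderiv : ∀ x ∈ Set.Ioi (0:ℝ),
      HasDerivWithinAt (fun s : ℝ => s ^ c) (c * x ^ (c - 1)) (Set.Ioi 0) x :=
    fun x hx => (Real.hasDerivAt_rpow_const (Or.inl (ne_of_gt hx))).hasDerivWithinAt
  have hinj : Set.InjOn (fun s : ℝ => s ^ c) (Set.Ioi 0) := by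
    intro a ha b hb hab
    have h2 := congrArg (fun y : ℝ => y ^ c⁻¹) hab
    simpa [Real.rpow_rpow_inv (le_of_lt ha) hc0.ne',
      Real.rpow_rpow_inv (le_of_lt hb) hc0.ne'] using h2
  calc ∫⁻ t in Set.Ioi (0:ℝ), φ t
      = ∫⁻ t in (fun s:ℝ => s ^ c) '' Set.Ioi 0, φ t := by rw [himg]
    _ = ∫⁻ x in Set.Ioi (0:ℝ), ENNReal.ofReal |c * x ^ (c-1)| * φ (x ^ c) :=
        my_lintegral_image measurableSet_Ioi hderiv hinj φ
    _ = _ := by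
        apply setLIntegral_congr_fun measurableSet_Ioi
        intro x hx
        beta_reduce
        rw [abs_of_nonneg (mul_nonneg hc0.le (Real.rpow_nonneg (le_of_lt hx) _))]


lemma my_key {c : ℝ} (hc : 1 ≤ c) {g : ℝ → ℝ≥0∞} (hg : Antitone g) (hg1 : ∀ t, g t ≤ 1) :
    (∫⁻ t in Set.Ioi (0:ℝ), g t) ^ c
      ≤ ∫⁻ s in Set.Ioi (0:ℝ), ENNReal.ofReal (c * s ^ (c - 1)) * g s := by
  have hc0 : 0 < c := lt_of_lt_of_le one_pos hc
  have hgmeas : Measurable g := hg.measurable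
  set I : ℝ≥0∞ := ∫⁻ t in Set.Ioi (0:ℝ), g t with hI
  rcases eq_or_ne I 0 with h0 | h0
  · rw [h0, ENNReal.zero_rpow_of_pos hc0]; exact zero_le
  rcases eq_or_ne I ∞ with htop | htop
  · -- show RHS = ∞
    have h1 : (∫⁻ t in Set.Ioc (0:ℝ) 1, g t) ≤ 1 := by
      calc (∫⁻ t in Set.Ioc (0:ℝ) 1, g t) ≤ ∫⁻ _ in Set.Ioc (0:ℝ) 1, 1 :=
            lintegral_mono fun t => hg1 t
        _ = volume (Set.Ioc (0:ℝ) 1) := by simp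
        _ = 1 := by simp [Real.volume_Ioc]
    have hsplit : I = (∫⁻ t in Set.Ioc (0:ℝ) 1, g t) + ∫⁻ t in Set.Ioi (1:ℝ), g t := by
      rw [hI, ← Set.Ioc_union_Ioi_eq_Ioi (zero_le_one (α := ℝ)),
        lintegral_union measurableSet_Ioi (Set.Ioc_disjoint_Ioi le_rfl)]
    have htail : (∫⁻ t in Set.Ioi (1:ℝ), g t) = ∞ := by
      by_contra hne
      have : I ≠ ∞ := by
        rw [hsplit]
        exact ENNReal.add_ne_top.mpr ⟨ne_top_of_le_ne_top ENNReal.one_ne_top h1, hne⟩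
      exact this htop
    have hw : ∀ s ∈ Set.Ioi (1:ℝ), g s ≤ ENNReal.ofReal (c * s ^ (c - 1)) * g s := by
      intro s hs
      have h1s : (1:ℝ) ≤ s ^ (c - 1) := by
        calc (1:ℝ) = 1 ^ (c - 1) := (Real.one_rpow _).symm
          _ ≤ s ^ (c - 1) := Real.rpow_le_rpow zero_le_one (le_of_lt hs) (by linarith)
      have : (1:ℝ≥0∞) ≤ ENNReal.ofReal (c * s ^ (c - 1)) := by
        rw [show (1:ℝ≥0∞) = ENNReal.ofReal 1 by simp]
        exact ENNReal.ofReal_le_ofReal (by nlinarith)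
      nth_rewrite 1 [← one_mul (g s)]
      exact mul_le_mul_left this _
    have : (∫⁻ t in Set.Ioi (1:ℝ), g t)
        ≤ ∫⁻ s in Set.Ioi (0:ℝ), ENNReal.ofReal (c * s ^ (c - 1)) * g s := by
      calc (∫⁻ t in Set.Ioi (1:ℝ), g t)
          ≤ ∫⁻ s in Set.Ioi (1:ℝ), ENNReal.ofReal (c * s ^ (c - 1)) * g s := by
            apply setLIntegral_mono' measurableSet_Ioi hw
        _ ≤ _ := lintegral_mono_set (Set.Ioi_subset_Ioi zero_le_one)
    rw [htail] at this
    exact le_trans (le_top) (by simpa using this)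
  · -- main case 0 < I < ∞
    set I' : ℝ := I.toReal with hI'def
    have hI'pos : 0 < I' := ENNReal.toReal_pos h0 htop
    have hIof : ENNReal.ofReal I' = I := ENNReal.ofReal_toReal htop
    set w : ℝ → ℝ≥0∞ := fun s => ENNReal.ofReal (c * s ^ (c - 1)) with hw
    have hwmeas : Measurable w :=
      ((Real.continuous_rpow_const (by linarith : (0:ℝ) ≤ c - 1)).measurable.const_mul c).ennreal_ofReal
    set a : ℝ≥0∞ := ∫⁻ t in Set.Ioc (0:ℝ) I', g t with ha
    set b : ℝ≥0∞ := ∫⁻ t in Set.Ioi I', g t with hb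
    have hab : a + b = I := by
      rw [hI, ← Set.Ioc_union_Ioi_eq_Ioi hI'pos.le,
        lintegral_union measurableSet_Ioi (Set.Ioc_disjoint_Ioi le_rfl)]
    have ha_le : a ≤ ENNReal.ofReal I' := by
      calc a ≤ ∫⁻ _ in Set.Ioc (0:ℝ) I', 1 := lintegral_mono fun t => hg1 t
        _ = volume (Set.Ioc (0:ℝ) I') := by simp
        _ = ENNReal.ofReal I' := by simp [Real.volume_Ioc]
    have ha_fin : a ≠ ∞ := ne_top_of_le_ne_top ENNReal.ofReal_ne_top ha_le
    set W : ℝ≥0∞ := ENNReal.ofReal (c * I' ^ (c - 1)) with hW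
    -- Step A : ∫ w over Ioc 0 I' = ofReal (I'^c)
    have hintA : ∫⁻ s in Set.Ioc (0:ℝ) I', w s = ENNReal.ofReal (I' ^ c) := by
      have hint : IntegrableOn (fun s : ℝ => c * s ^ (c - 1)) (Set.Ioc 0 I') volume := by
        have : IntervalIntegrable (fun s : ℝ => c * s ^ (c - 1)) volume 0 I' :=
          (intervalIntegral.intervalIntegrable_rpow' (by linarith)).const_mul c
        rwa [intervalIntegrable_iff_integrableOn_Ioc_of_le hI'pos.le] at this
      have hnn : 0 ≤ᵐ[volume.restrict (Set.Ioc (0:ℝ) I')] fun s : ℝ => c * s ^ (c - 1) := by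
        filter_upwards [self_mem_ae_restrict (measurableSet_Ioc :
          MeasurableSet (Set.Ioc (0:ℝ) I'))] with s hs
        exact mul_nonneg hc0.le (Real.rpow_nonneg hs.1.le _)
      rw [hw, ← MeasureTheory.ofReal_integral_eq_lintegral_ofReal hint hnn]
      congr 1
      rw [← intervalIntegral.integral_of_le hI'pos.le]
      rw [intervalIntegral.integral_const_mul, integral_rpow (Or.inl (by linarith : (-1:ℝ) < c - 1))]
      rw [sub_add_cancel]
      rw [Real.zero_rpow hc0.ne']
      field_simp
      simp
    -- Step B pointwise on Ioc 0 I'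
    have hB : ∀ s ∈ Set.Ioc (0:ℝ) I', w s ≤ w s * g s + W * (1 - g s) := by
      intro s hs
      have hwW : w s ≤ W := by
        apply ENNReal.ofReal_le_ofReal
        exact mul_le_mul_of_nonneg_left
          (Real.rpow_le_rpow hs.1.le hs.2 (by linarith)) hc0.le
      have hsum : g s + (1 - g s) = 1 := add_tsub_cancel_of_le (hg1 s)
      calc w s = w s * (g s + (1 - g s)) := by rw [hsum, mul_one]
        _ = w s * g s + w s * (1 - g s) := mul_add _ _ _
        _ ≤ w s * g s + W * (1 - g s) := add_le_add_right (mul_le_mul_left hwW _) _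
    -- integrate B
    have hBint : ENNReal.ofReal (I' ^ c)
        ≤ (∫⁻ s in Set.Ioc (0:ℝ) I', w s * g s) + W * b := by
      have h1m : (∫⁻ s in Set.Ioc (0:ℝ) I', (1 - g s)) = ENNReal.ofReal I' - a := by
        rw [lintegral_sub hgmeas ha_fin (Filter.Eventually.of_forall fun t => hg1 t)]
        congr 1
        simp [Real.volume_Ioc, hI'pos.le]
      have hba : ENNReal.ofReal I' - a ≤ b := by
        rw [hIof, ← hab, ENNReal.add_sub_cancel_left ha_fin]
      calc ENNReal.ofReal (I' ^ c) = ∫⁻ s in Set.Ioc (0:ℝ) I', w s := hintA.symm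
        _ ≤ ∫⁻ s in Set.Ioc (0:ℝ) I', (w s * g s + W * (1 - g s)) :=
            setLIntegral_mono' measurableSet_Ioc hB
        _ = (∫⁻ s in Set.Ioc (0:ℝ) I', w s * g s)
              + ∫⁻ s in Set.Ioc (0:ℝ) I', W * (1 - g s) :=
            lintegral_add_left (hwmeas.mul hgmeas) _
        _ = (∫⁻ s in Set.Ioc (0:ℝ) I', w s * g s) + W * (ENNReal.ofReal I' - a) := by
            rw [lintegral_const_mul W (f := fun s => 1 - g s) (measurable_const.sub hgmeas), h1m]
        _ ≤ _ := add_le_add_right (mul_le_mul_right hba W) _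
    -- Step C : RHS ≥ pieces
    have hC : (∫⁻ s in Set.Ioc (0:ℝ) I', w s * g s) + W * b
        ≤ ∫⁻ s in Set.Ioi (0:ℝ), w s * g s := by
      rw [← Set.Ioc_union_Ioi_eq_Ioi hI'pos.le,
        lintegral_union measurableSet_Ioi (Set.Ioc_disjoint_Ioi le_rfl)]
      apply add_le_add_right
      have : W * b = ∫⁻ s in Set.Ioi I', W * g s := (lintegral_const_mul W hgmeas).symm
      rw [this]
      apply setLIntegral_mono' measurableSet_Ioi
      intro s hs
      have : W ≤ w s := by
        apply ENNReal.ofReal_le_ofReal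
        exact mul_le_mul_of_nonneg_left
          (Real.rpow_le_rpow hI'pos.le (le_of_lt hs) (by linarith)) hc0.le
      exact mul_le_mul_left this _
    calc I ^ c = (ENNReal.ofReal I') ^ c := by rw [hIof]
      _ = ENNReal.ofReal (I' ^ c) := ENNReal.ofReal_rpow_of_pos hI'pos
      _ ≤ _ := le_trans hBint hC



/-- The Choquet integral of `f` on `A` with respect to the monotone set
function `μ`: `(C)∫_A f dμ = ∫_0^∞ μ(A ∩ {f ≥ t}) dt`. -/
noncomputable def choquet {X : Type*} (μ : Set X → ℝ≥0∞) (f : X → ℝ≥0∞)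
    (A : Set X) : ℝ≥0∞ :=
  ∫⁻ t in Set.Ioi (0:ℝ), μ (A ∩ {x | ENNReal.ofReal t ≤ f x})

/-- Jensen type inequality for the Choquet integral with respect to a
monotone measure `m` with `m(X) = 1`: for `c ≥ 1`,
`((C)∫_X f dm)^c ≤ (C)∫_X f^c dm`. -/
theorem jensen_type_choquet {X : Type*} [MeasurableSpace X]
    -- m : F → [0,∞] is a monotone measure with m(X) = 1
    (m : Set X → ℝ≥0∞)
    (hm0 : m ∅ = 0) (hmX : m Set.univ = 1)
    (hmmono : ∀ A B : Set X, MeasurableSet A → MeasurableSet B → A ⊆ B → m A ≤ m B)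
    -- c ≥ 1 and f : X → [0,∞) measurable
    (c : ℝ) (hc : 1 ≤ c)
    (f : X → ℝ≥0∞) (hf : Measurable f) (hfin : ∀ x, f x ≠ ∞) :
    (choquet m f Set.univ) ^ c ≤ choquet m (fun x => f x ^ c) Set.univ := by
  have hc0 : 0 < c := lt_of_lt_of_le one_pos hc
  set g : ℝ → ℝ≥0∞ := fun t => m {x | ENNReal.ofReal t ≤ f x} with hg
  have hmeas : ∀ t : ℝ, MeasurableSet {x | ENNReal.ofReal t ≤ f x} := fun t =>
    measurableSet_le measurable_const hf
  have hganti : Antitone g := by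
    intro s t hst
    exact hmmono _ _ (hmeas t) (hmeas s)
      (fun x hx => le_trans (ENNReal.ofReal_le_ofReal hst) hx)
  have hg1 : ∀ t, g t ≤ 1 := fun t =>
    hmX ▸ hmmono _ _ (hmeas t) MeasurableSet.univ (Set.subset_univ _)
  have hL : choquet m f Set.univ = ∫⁻ t in Set.Ioi (0:ℝ), g t := by
    simp only [choquet, Set.univ_inter]
    rfl
  have hR : choquet m (fun x => f x ^ c) Set.univ
      = ∫⁻ s in Set.Ioi (0:ℝ), ENNReal.ofReal (c * s ^ (c - 1)) * g s := by
    simp only [choquet, Set.univ_inter]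
    rw [my_subst_rpow hc (fun t => m {x | ENNReal.ofReal t ≤ f x ^ c})]
    apply setLIntegral_congr_fun measurableSet_Ioi
    intro s hs
    beta_reduce
    congr 1
    have hset : {x | ENNReal.ofReal (s ^ c) ≤ f x ^ c} = {x | ENNReal.ofReal s ≤ f x} := by
      ext x
      simp only [Set.mem_setOf_eq]
      rw [← ENNReal.ofReal_rpow_of_pos hs, ENNReal.rpow_le_rpow_iff hc0]
    rw [hset]
  rw [hL, hR]
  exact my_key hc hganti hg1
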